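/- Let n, m be integers with 2 ≤ m < n and define γ_j := (n+m−1)(n+m−2)/((n+j)(n+j−1)(n+j−2)) for m+1 ≤ j ≤ n−1 and γ_m := 1/(n+m). Then these γ_j solve the linear system ∑_{j=m}^{i−1} (n − j + 2i − 2)·γ_j = i − m for every i with m+1 ≤ i ≤ n. -/

import Mathlib

theorem gamma_solves_linear_system (n m : ℤ) (hm : 2 ≤ m) (hmn : m < n)
    (γ : ℤ → ℚ) (hγm : γ m = 1 / ((n : ℚ) + (m : ℚ)))
    (hγ : ∀ j, m + 1 ≤ j → j ≤ n - 1 →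
      γ j = ((n : ℚ) + m - 1) * ((n : ℚ) + m - 2) /
        (((n : ℚ) + j) * ((n : ℚ) + j - 1) * ((n : ℚ) + j - 2))) :
    ∀ i, m + 1 ≤ i → i ≤ n →
      ∑ j ∈ Finset.Icc m (i - 1), ((n : ℚ) - (j : ℚ) + 2 * (i : ℚ) - 2) * γ j =
        (i : ℚ) - (m : ℚ) := by
  have hmQ : (2:ℚ) ≤ (m:ℚ) := by exact_mod_cast hm
  have hmnQ : (m:ℚ) < (n:ℚ) := by exact_mod_cast hmn
  have hnm0 : (n:ℚ) + m ≠ 0 := by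
    have : (0:ℚ) < (n:ℚ) + m := by linarith
    linarith
  have hnm1 : (n:ℚ) + m - 1 ≠ 0 := by
    have : (0:ℚ) < (n:ℚ) + m - 1 := by linarith
    linarith
  have hins : ∀ i : ℤ, m + 1 ≤ i →
      Finset.Icc m i = insert i (Finset.Icc m (i - 1)) := by
    intro i hi
    ext x
    simp only [Finset.mem_Icc, Finset.mem_insert]
    omega
  -- closed form for partial sums of γ
  have key : ∀ i, m + 1 ≤ i → i ≤ n →
      ∑ j ∈ Finset.Icc m (i - 1), γ j =
        1/2 - ((n:ℚ) + m - 1) * ((n:ℚ) + m - 2) /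
          (2 * ((n:ℚ) + i - 1) * ((n:ℚ) + i - 2)) := by
    intro i hi
    refine Int.le_induction (motive := fun k _ => k ≤ n →
      ∑ j ∈ Finset.Icc m (k - 1), γ j =
        1/2 - ((n:ℚ) + m - 1) * ((n:ℚ) + m - 2) /
          (2 * ((n:ℚ) + k - 1) * ((n:ℚ) + k - 2))) ?_ ?_ i hi
    · intro _
      rw [show m + 1 - 1 = m by ring, Finset.Icc_self, Finset.sum_singleton, hγm,
        show ((n:ℚ) + ((m+1 : ℤ):ℚ) - 1) = (n:ℚ) + m by push_cast; ring,
        show ((n:ℚ) + ((m+1 : ℤ):ℚ) - 2) = (n:ℚ) + m - 1 by push_cast; ring]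
      field_simp
      ring
    · intro i hi' ih hin
      have hin' : i ≤ n := by linarith
      have hiQ : (m:ℚ) + 1 ≤ (i:ℚ) := by exact_mod_cast hi'
      have hinQ : (i:ℚ) + 1 ≤ (n:ℚ) := by exact_mod_cast hin
      have h1 : (n:ℚ) + i ≠ 0 := by
        have : (0:ℚ) < (n:ℚ) + i := by linarith
        linarith
      have h2 : (n:ℚ) + i - 1 ≠ 0 := by
        have : (0:ℚ) < (n:ℚ) + i - 1 := by linarith
        linarith
      have h3 : (n:ℚ) + i - 2 ≠ 0 := by
        have : (0:ℚ) < (n:ℚ) + i - 2 := by linarith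
        linarith
      rw [show i + 1 - 1 = i by ring, hins i hi',
        Finset.sum_insert (by simp only [Finset.mem_Icc]; omega),
        hγ i hi' (by linarith), ih hin',
        show ((n:ℚ) + ((i+1 : ℤ):ℚ) - 1) = (n:ℚ) + i by push_cast; ring,
        show ((n:ℚ) + ((i+1 : ℤ):ℚ) - 2) = (n:ℚ) + i - 1 by push_cast; ring]
      field_simp
      ring
  intro i hi
  refine Int.le_induction (motive := fun k _ => k ≤ n →
      ∑ j ∈ Finset.Icc m (k - 1), ((n : ℚ) - (j : ℚ) + 2 * (k : ℚ) - 2) * γ j =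
        (k : ℚ) - (m : ℚ)) ?_ ?_ i hi
  · intro _
    rw [show m + 1 - 1 = m by ring, Finset.Icc_self, Finset.sum_singleton, hγm,
      show ((m+1 : ℤ):ℚ) = (m:ℚ) + 1 by push_cast; ring]
    field_simp
    ring
  · intro i hi' ih hin
    have hin' : i ≤ n := by linarith
    have hiQ : (m:ℚ) + 1 ≤ (i:ℚ) := by exact_mod_cast hi'
    have hinQ : (i:ℚ) + 1 ≤ (n:ℚ) := by exact_mod_cast hin
    have h1 : (n:ℚ) + i ≠ 0 := by
      have : (0:ℚ) < (n:ℚ) + i := by linarith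
      linarith
    have h2 : (n:ℚ) + i - 1 ≠ 0 := by
      have : (0:ℚ) < (n:ℚ) + i - 1 := by linarith
      linarith
    have h3 : (n:ℚ) + i - 2 ≠ 0 := by
      have : (0:ℚ) < (n:ℚ) + i - 2 := by linarith
      linarith
    have hT := key i hi' hin'
    have hS := ih hin'
    rw [show i + 1 - 1 = i by ring, hins i hi',
      Finset.sum_insert (by simp only [Finset.mem_Icc]; omega),
      hγ i hi' (by linarith)]
    have hrw : ∀ j ∈ Finset.Icc m (i-1),
        ((n:ℚ) - (j:ℚ) + 2 * ((i+1 : ℤ):ℚ) - 2) * γ j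
          = ((n:ℚ) - (j:ℚ) + 2 * (i:ℚ) - 2) * γ j + 2 * γ j := by
      intro j _; push_cast; ring
    rw [Finset.sum_congr rfl hrw, Finset.sum_add_distrib, ← Finset.mul_sum, hT, hS,
      show ((i+1 : ℤ):ℚ) = (i:ℚ) + 1 by push_cast; ring]
    field_simp
    ring
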